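/- Let G = (V,E) be a directed mixed graph and let ν be an inducing path from α to β in G. Then for every C ⊆ V∖{α}: if α ≠ β there exists a μ-connecting path from α to β given C, and if α = β there exists a μ-connecting cycle from α to β given C. Moreover, if ν is bidirected or directed, then the μ-connecting path or cycle can be chosen endpoint-identical to ν. -/

import Mathlib

/-!
Directed mixed graphs (DMGs) with μ-separation, following
Mogensen & Hansen, "Markov equivalence of marginalized local independence graphs".
-/

universe u

/-- A directed mixed graph on node set `V`: a set of directed edges (`dir a b`
meaning `a → b`) and a set of bidirected edges (`bi`, a symmetric relation since
bidirected edges are unordered pairs).  Loops are allowed. -/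
structure DMG (V : Type u) where
  dir : V → V → Prop
  bi : V → V → Prop
  bi_symm : ∀ a b, bi a b → bi b a

namespace DMG

variable {V : Type u}

/-- A single step of a walk: an edge instance together with the direction in
which it is traversed (this records, in particular, orientations of loops).
A directed edge has a tail at its source and a head at its target; a bidirected
edge has heads at both endpoints. -/
inductive Step (G : DMG V) : V → V → Type u
  | dirF : ∀ {a b : V}, G.dir a b → Step G a b
  | dirB : ∀ {a b : V}, G.dir b a → Step G a b
  | bid  : ∀ {a b : V}, G.bi a b → Step G a b

/-- Whether the step has a head (edge mark) at its start node. -/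
def Step.headStart {G : DMG V} : ∀ {a b : V}, Step G a b → Bool
  | _, _, .dirF _ => false
  | _, _, .dirB _ => true
  | _, _, .bid _ => true

/-- Whether the step has a head (edge mark) at its end node. -/
def Step.headEnd {G : DMG V} : ∀ {a b : V}, Step G a b → Bool
  | _, _, .dirF _ => true
  | _, _, .dirB _ => false
  | _, _, .bid _ => true

/-- The step traverses a bidirected edge. -/
def Step.IsBid {G : DMG V} {a b : V} : Step G a b → Prop
  | .bid _ => True
  | _ => False

/-- The step traverses a directed edge, forwards. -/
def Step.IsDirF {G : DMG V} {a b : V} : Step G a b → Prop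
  | .dirF _ => True
  | _ => False

/-- The underlying edge of a step: a directed edge is the ordered pair
(tail, head); a bidirected edge is the unordered pair of its endpoints. -/
def Step.edge {G : DMG V} : ∀ {a b : V}, Step G a b → (V × V) ⊕ (Sym2 V)
  | a, b, .dirF _ => Sum.inl (a, b)
  | a, b, .dirB _ => Sum.inl (b, a)
  | a, b, .bid _ => Sum.inr s(a, b)

/-- A walk in a DMG: an alternating sequence of nodes and edges, each edge
between its neighbouring nodes, with a chosen orientation of each edge
(in particular of each directed loop). -/
inductive Walk (G : DMG V) : V → V → Type u
  | nil (a : V) : Walk G a a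
  | cons {a b c : V} (s : Step G a b) (w : Walk G b c) : Walk G a c

namespace Walk

variable {G : DMG V}

/-- A nontrivial walk contains at least one edge. -/
def Nontrivial : ∀ {a b : V}, Walk G a b → Prop
  | _, _, .nil _ => False
  | _, _, .cons _ _ => True

/-- The list of nodes of a walk, in order (with multiplicity). -/
def nodes : ∀ {a b : V}, Walk G a b → List V
  | a, _, .nil _ => [a]
  | a, _, .cons _ w => a :: w.nodes

/-- The non-endpoint (internal) nodes of a walk, in order (with multiplicity). -/
def interior {a b : V} (w : Walk G a b) : List V :=
  (w.nodes.dropLast).drop 1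

/-- The list of edges of a walk. -/
def edges : ∀ {a b : V}, Walk G a b → List ((V × V) ⊕ (Sym2 V))
  | _, _, .nil _ => []
  | _, _, .cons s w => s.edge :: w.edges

/-- Whether the first edge of the walk has a head at the first node
(`false` for a trivial walk). -/
def firstHead : ∀ {a b : V}, Walk G a b → Bool
  | _, _, .nil _ => false
  | _, _, .cons s _ => s.headStart

/-- Whether the last edge of the walk has a head at the last node
(`false` for a trivial walk). -/
def lastHead : ∀ {a b : V}, Walk G a b → Bool
  | _, _, .nil _ => false
  | _, _, .cons s (.nil _) => s.headEnd
  | _, _, .cons _ (.cons t w) => lastHead (Walk.cons t w)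

/-- Helper: conditions at all remaining internal node instances of a walk,
where `h` records whether the edge arriving at the current start node has a
head there.  A node instance is a collider if both adjoining edges have a
head at it; a collider must lie in `Anc`, a noncollider must avoid `C`. -/
def openFrom (C Anc : Set V) : ∀ {a b : V}, Bool → Walk G a b → Prop
  | _, _, _, .nil _ => True
  | a, _, h, .cons s w =>
      (if h && s.headStart then a ∈ Anc else a ∉ C) ∧ openFrom C Anc s.headEnd w

/-- Helper: every remaining internal node instance which is a collider lies in `S`. -/
def collInFrom (S : Set V) : ∀ {a b : V}, Bool → Walk G a b → Prop
  | _, _, _, .nil _ => True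
  | a, _, h, .cons s w =>
      ((h && s.headStart) = true → a ∈ S) ∧ collInFrom S s.headEnd w

/-- Every collider (internal node instance with heads on both sides) of the
walk lies in `S`. -/
def CollidersIn (S : Set V) : ∀ {a b : V}, Walk G a b → Prop
  | _, _, .nil _ => True
  | _, _, .cons s w => collInFrom S s.headEnd w

/-- The walk has no colliders. -/
def NoColliders {a b : V} (w : Walk G a b) : Prop :=
  w.CollidersIn ∅

/-- Helper: every remaining internal node instance is a collider. -/
def allCollFrom : ∀ {a b : V}, Bool → Walk G a b → Prop
  | _, _, _, .nil _ => True
  | _, _, h, .cons s w => (h && s.headStart) = true ∧ allCollFrom s.headEnd w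

/-- Every internal node instance of the walk is a collider (no noncolliders). -/
def AllColliders : ∀ {a b : V}, Walk G a b → Prop
  | _, _, .nil _ => True
  | _, _, .cons s w => allCollFrom s.headEnd w

/-- Every edge of the walk is bidirected. -/
def AllBid : ∀ {a b : V}, Walk G a b → Prop
  | _, _, .nil _ => True
  | _, _, .cons s w => s.IsBid ∧ w.AllBid

/-- The walk consists of a directed first edge (pointing forwards) followed by
bidirected edges only (the form `α → β` or `α → γ₁ ↔ ⋯ ↔ γₙ ↔ β`). -/
def UniForm : ∀ {a b : V}, Walk G a b → Prop
  | _, _, .nil _ => False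
  | _, _, .cons s w => s.IsDirF ∧ w.AllBid

end Walk

/-- `a` is an ancestor of `b`: there is a (possibly trivial) directed path
from `a` to `b`. -/
def anc (G : DMG V) (a b : V) : Prop := Relation.ReflTransGen G.dir a b

/-- The set of ancestors of nodes of `C`. -/
def anSet (G : DMG V) (C : Set V) : Set V := {a | ∃ c ∈ C, G.anc a c}

/-- The walk is μ-connecting given `C`: it is nontrivial, its first node is not
in `C`, every collider lies in `An(C)`, no noncollider lies in `C`, and its
final edge has a head at the final node. -/
def Walk.MuConn {G : DMG V} (C : Set V) : ∀ {a b : V}, Walk G a b → Prop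
  | _, _, .nil _ => False
  | a, _, .cons s w =>
      a ∉ C ∧ Walk.openFrom C (G.anSet C) s.headEnd w ∧ (Walk.cons s w).lastHead = true

/-- `B` is μ-separated from `A` given `C` in `G`: there is no μ-connecting
walk from any node of `A` to any node of `B` given `C`. -/
def muSep (G : DMG V) (A B C : Set V) : Prop :=
  ∀ ⦃a b : V⦄, a ∈ A → b ∈ B → ∀ w : Walk G a b, ¬ w.MuConn C

/-- Two DMGs on the same node set are Markov equivalent: they induce the same
independence model via μ-separation, i.e. `I(G₁) = I(G₂)`. -/
def MarkovEq (G₁ G₂ : DMG V) : Prop :=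
  ∀ A B C : Set V, muSep G₁ A B C ↔ muSep G₂ A B C

/-- `b` is separable from `a` in `I(G)`: there is `C ⊆ V ∖ {a}` with
`⟨{a},{b} | C⟩ ∈ I(G)`. -/
def separable (G : DMG V) (a b : V) : Prop :=
  ∃ C : Set V, a ∉ C ∧ muSep G {a} {b} C

/-- `a ∈ u(b, I(G))`: `b` is inseparable from `a` in `I(G)`. -/
def inU (G : DMG V) (a b : V) : Prop := ¬ G.separable a b

/-- `G₁` is a subgraph of `G₂` (same node set, edge-set inclusion). -/
def Sub (G₁ G₂ : DMG V) : Prop :=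
  (∀ a b, G₁.dir a b → G₂.dir a b) ∧ (∀ a b, G₁.bi a b → G₂.bi a b)

/-- The DMG obtained by adding the directed edge `a → b`. -/
def addDir (G : DMG V) (a b : V) : DMG V where
  dir x y := G.dir x y ∨ (x = a ∧ y = b)
  bi := G.bi
  bi_symm := G.bi_symm

/-- The DMG obtained by adding the bidirected edge `a ↔ b`. -/
def addBi (G : DMG V) (a b : V) : DMG V where
  dir := G.dir
  bi x y := G.bi x y ∨ (x = a ∧ y = b) ∨ (x = b ∧ y = a)
  bi_symm x y h := by
    rcases h with h | h | h
    · exact Or.inl (G.bi_symm _ _ h)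
    · exact Or.inr (Or.inr ⟨h.2, h.1⟩)
    · exact Or.inr (Or.inl ⟨h.2, h.1⟩)

/-- The DMG obtained by removing the directed edge `a → b`. -/
def removeDir (G : DMG V) (a b : V) : DMG V where
  dir x y := G.dir x y ∧ ¬(x = a ∧ y = b)
  bi := G.bi
  bi_symm := G.bi_symm

/-- The DMG obtained by removing the bidirected edge `a ↔ b`. -/
def removeBi (G : DMG V) (a b : V) : DMG V where
  dir := G.dir
  bi x y := G.bi x y ∧ ¬((x = a ∧ y = b) ∨ (x = b ∧ y = a))
  bi_symm x y h := ⟨G.bi_symm _ _ h.1, fun hc => h.2 (by tauto)⟩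

/-- The complete DMG: all directed and all bidirected edges present. -/
def IsComplete (G : DMG V) : Prop :=
  (∀ a b, G.dir a b) ∧ (∀ a b, G.bi a b)

/-- A DMG is maximal if it is complete, or adding any (absent) edge changes the
induced independence model. -/
def IsMaximal (G : DMG V) : Prop :=
  G.IsComplete ∨
    ∀ a b : V, (¬ G.dir a b → ¬ MarkovEq (G.addDir a b) G) ∧
      (¬ G.bi a b → ¬ MarkovEq (G.addBi a b) G)

end DMG
namespace DMG

variable {V : Type u}

/-- An inducing path from `a` to `b`: a nontrivial path or cycle from `a` to
`b` with a head at `b`, with no noncolliders, and on which every node is an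
ancestor of `a` or of `b`. -/
def IsInducingPath (G : DMG V) {a b : V} (w : Walk G a b) : Prop :=
  w.Nontrivial ∧
  (w.nodes.Nodup ∨ (a = b ∧ w.nodes.dropLast.Nodup)) ∧
  w.lastHead = true ∧
  w.AllColliders ∧
  ∀ x ∈ w.nodes, G.anc x a ∨ G.anc x b

/-- A bidirected inducing path: an inducing path all of whose edges are bidirected. -/
def IsBidirectedIP (G : DMG V) {a b : V} (w : Walk G a b) : Prop :=
  G.IsInducingPath w ∧ w.AllBid

/-- A directed inducing path: an inducing path of the form `α → β` or
`α → γ₁ ↔ ⋯ ↔ γₙ ↔ β` with every `γᵢ` an ancestor of `β`. -/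
def IsDirectedIP (G : DMG V) {a b : V} (w : Walk G a b) : Prop :=
  G.IsInducingPath w ∧ w.UniForm ∧ ∀ x ∈ w.interior, G.anc x b

/-- There exists a nontrivial walk in `G` between `x` and `y` with no
colliders, all non-endpoint nodes in `M`, and with edge marks `hs` at `x`
(`true` = head) and `he` at `y`. -/
def ConnThrough (G : DMG V) (M : Set V) (x y : V) (hs he : Bool) : Prop :=
  ∃ w : Walk G x y, w.Nontrivial ∧ w.NoColliders ∧
    (∀ z ∈ w.interior, z ∈ M) ∧ w.firstHead = hs ∧ w.lastHead = he

/-- The latent projection `m(G, O)` of `G` on `O`: the DMG on node set `O`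
having an edge (with given endpoint marks) between `α` and `β` if and only if
`G` contains a nontrivial endpoint-identical walk between `α` and `β` with no
colliders and all non-endpoint nodes in `M = V ∖ O`. -/
def latentProj (G : DMG V) (O : Set V) : DMG {x : V // x ∈ O} where
  dir x y := ConnThrough G Oᶜ x.1 y.1 false true
  bi x y := ConnThrough G Oᶜ x.1 y.1 true true ∨ ConnThrough G Oᶜ y.1 x.1 true true
  bi_symm x y h := h.symm

/-- `x` is directedly collider-connected to `b`: there is a nontrivial walk
from `x` to `b` with a head at `b` on which every non-endpoint node is a
collider. -/
def dirCollConn (G : DMG V) (x b : V) : Prop :=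
  ∃ w : Walk G x b, w.Nontrivial ∧ w.AllColliders ∧ w.lastHead = true

/-- The set `D(a,b)` of nodes in `An({a,b})` directedly collider-connected to
`b`, except `a`. -/
def Dset (G : DMG V) (a b : V) : Set V :=
  {x | x ∈ G.anSet {a, b} ∧ G.dirCollConn x b} \ {a}

/-- `a` and `b` are potential siblings in the independence model `I(G)`. -/
def PotSib (G : DMG V) (a b : V) : Prop :=
  (G.inU b a ∧ G.inU a b) ∧
  (∀ (γ : V) (C : Set V), b ∈ C → muSep G {γ} {a} C → muSep G {γ} {b} C) ∧
  (∀ (γ : V) (C : Set V), a ∈ C → muSep G {γ} {b} C → muSep G {γ} {a} C)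

/-- `a` is a potential parent of `b` in the independence model `I(G)`. -/
def PotPar (G : DMG V) (a b : V) : Prop :=
  G.inU a b ∧
  (∀ (γ : V) (C : Set V), a ∉ C → muSep G {γ} {b} C → muSep G {γ} {a} C) ∧
  (∀ (γ δ : V) (C : Set V), a ∉ C → b ∈ C →
    muSep G {γ} {δ} C → muSep G {γ} {b} C ∨ muSep G {a} {δ} C) ∧
  (∀ (γ : V) (C : Set V), a ∉ C → muSep G {b} {γ} C → muSep G {b} {γ} (C ∪ {a}))

/-- The graph `N(I(G))`: directed edge `a → b` present iff `a` is a potential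
parent of `b` in `I(G)`, bidirected edge `a ↔ b` present iff `a` and `b` are
potential siblings in `I(G)` (potential siblinghood is symmetric). -/
def NGraph (G : DMG V) : DMG V where
  dir a b := G.PotPar a b
  bi a b := G.PotSib a b ∨ G.PotSib b a
  bi_symm _ _ h := h.symm

/-- A path is m-connecting given `C` if it is a path (no repeated nodes), no
noncollider on it is in `C` and every collider on it is in `An(C)`. -/
def Walk.MConn {G : DMG V} (C : Set V) : ∀ {a b : V}, Walk G a b → Prop
  | _, _, .nil _ => True
  | _, _, .cons s w =>
      (Walk.cons s w).nodes.Nodup ∧ Walk.openFrom C (G.anSet C) s.headEnd w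

/-- `A` and `B` are m-separated by `C`: there is no m-connecting path between
a node of `A` and a node of `B` given `C`. -/
def mSep (G : DMG V) (A B C : Set V) : Prop :=
  ∀ ⦃a b : V⦄, a ∈ A → b ∈ B →
    (∀ w : Walk G a b, ¬ w.MConn C) ∧ (∀ w : Walk G b a, ¬ w.MConn C)

/-- Auxiliary directed-edge relation of the `B`-history version of `G`. -/
def histDir (G : DMG V) (B : Set V) : (V ⊕ {x : V // x ∈ B}) → (V ⊕ {x : V // x ∈ B}) → Prop
  | .inl u, .inl v => G.dir u v
  | .inl u, .inr v => G.dir u v.1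
  | _, _ => False

/-- Auxiliary bidirected-edge relation of the `B`-history version of `G`. -/
def histBi (G : DMG V) (B : Set V) : (V ⊕ {x : V // x ∈ B}) → (V ⊕ {x : V // x ∈ B}) → Prop
  | .inl u, .inl v => G.bi u v
  | .inl u, .inr v => G.bi u v.1
  | .inr u, .inl v => G.bi u.1 v
  | .inr _, .inr _ => False

/-- The `B`-history version `G(B)` of `G`: node set `V ⊔ Bᵖ`, whose subgraph
on `V` is `G`, with additionally `α ↔ βᵖ` whenever `α ↔ β` in `G` and
`α → βᵖ` whenever `α → β` in `G` (for `α ∈ V`, `β ∈ B`). -/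
def hist (G : DMG V) (B : Set V) : DMG (V ⊕ {x : V // x ∈ B}) where
  dir := G.histDir B
  bi := G.histBi B
  bi_symm x y h := by
    cases x <;> cases y <;>
      simp only [histBi] at h ⊢ <;>
      first
        | exact G.bi_symm _ _ h
        | exact h

end DMG

section Aux
namespace DMG

variable {V : Type u} {G : DMG V}

namespace Walk

/-- Concatenation of walks. -/
def append : ∀ {a b c : V}, Walk G a b → Walk G b c → Walk G a c
  | _, _, _, .nil _, w₂ => w₂
  | _, _, _, .cons s w, w₂ => .cons s (w.append w₂)

@[simp] lemma nil_append {a b : V} (w : Walk G a b) : (Walk.nil a).append w = w := rfl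

@[simp] lemma cons_append {a b c d : V} (s : Step G a b) (w : Walk G b c) (w₂ : Walk G c d) :
    (Walk.cons s w).append w₂ = .cons s (w.append w₂) := rfl

lemma append_assoc {a b c d : V} (w₁ : Walk G a b) (w₂ : Walk G b c) (w₃ : Walk G c d) :
    (w₁.append w₂).append w₃ = w₁.append (w₂.append w₃) := by
  induction w₁ with
  | nil => rfl
  | cons s w ih => simp [ih]

@[simp] lemma nodes_nil {a : V} : (Walk.nil (G := G) a).nodes = [a] := rfl

@[simp] lemma nodes_cons {a b c : V} (s : Step G a b) (w : Walk G b c) :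
    (Walk.cons s w).nodes = a :: w.nodes := rfl

lemma nodes_ne_nil {a b : V} (w : Walk G a b) : w.nodes ≠ [] := by
  cases w <;> simp

lemma nodes_append {a b c : V} (w₁ : Walk G a b) (w₂ : Walk G b c) :
    (w₁.append w₂).nodes = w₁.nodes.dropLast ++ w₂.nodes := by
  induction w₁ with
  | nil => simp
  | cons s w ih =>
      simp [ih, List.dropLast_cons_of_ne_nil (nodes_ne_nil w)]

lemma nodes_eq_dropLast_append {a b : V} (w : Walk G a b) :
    w.nodes = w.nodes.dropLast ++ [b] := by
  induction w with
  | nil => simp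
  | cons s w ih =>
      simp only [nodes_cons, List.dropLast_cons_of_ne_nil (nodes_ne_nil w)]
      rw [List.cons_append, ← ih]

@[simp] lemma nontrivial_cons {a b c : V} (s : Step G a b) (w : Walk G b c) :
    (Walk.cons s w).Nontrivial := trivial

lemma not_nontrivial_nil {a : V} : ¬ (Walk.nil (G := G) a).Nontrivial := fun h => h

lemma Nontrivial.append_left {a b c : V} {w₁ : Walk G a b} (h : w₁.Nontrivial)
    (w₂ : Walk G b c) : (w₁.append w₂).Nontrivial := by
  cases w₁ with
  | nil => exact absurd h not_nontrivial_nil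
  | cons s w => exact trivial

lemma Nontrivial.append_right {a b c : V} (w₁ : Walk G a b) {w₂ : Walk G b c}
    (h : w₂.Nontrivial) : (w₁.append w₂).Nontrivial := by
  cases w₁ with
  | nil => exact h
  | cons s w => exact trivial

@[simp] lemma firstHead_cons {a b c : V} (s : Step G a b) (w : Walk G b c) :
    (Walk.cons s w).firstHead = s.headStart := rfl

lemma firstHead_append {a b c : V} {w₁ : Walk G a b} (h : w₁.Nontrivial) (w₂ : Walk G b c) :
    (w₁.append w₂).firstHead = w₁.firstHead := by
  cases w₁ with
  | nil => exact absurd h not_nontrivial_nil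
  | cons s w => rfl

lemma lastHead_cons_of_nontrivial {a b c : V} (s : Step G a b) {w : Walk G b c}
    (h : w.Nontrivial) : (Walk.cons s w).lastHead = w.lastHead := by
  cases w with
  | nil => exact absurd h not_nontrivial_nil
  | cons t w' => rfl

@[simp] lemma lastHead_cons_nil {a b : V} (s : Step G a b) :
    (Walk.cons s (Walk.nil b)).lastHead = s.headEnd := rfl

lemma lastHead_append {a b c : V} (w₁ : Walk G a b) {w₂ : Walk G b c} (h : w₂.Nontrivial) :
    (w₁.append w₂).lastHead = w₂.lastHead := by
  induction w₁ with
  | nil => rfl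
  | cons s w ih =>
      rw [cons_append, lastHead_cons_of_nontrivial s (Nontrivial.append_right w h), ih h]

/-- The mark at the end of `w`, defaulting to `h` for a trivial walk. -/
def lastHeadD (h : Bool) : ∀ {a b : V}, Walk G a b → Bool
  | _, _, .nil _ => h
  | _, _, .cons s w => (Walk.cons s w).lastHead

@[simp] lemma lastHeadD_nil {a : V} (h : Bool) : lastHeadD h (Walk.nil (G := G) a) = h := rfl

lemma lastHeadD_of_nontrivial {a b : V} (h : Bool) {w : Walk G a b} (hw : w.Nontrivial) :
    lastHeadD h w = w.lastHead := by
  cases w with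
  | nil => exact absurd hw not_nontrivial_nil
  | cons s w' => rfl

lemma lastHeadD_cons {a b c : V} (s : Step G a b) (w : Walk G b c) :
    lastHeadD s.headEnd w = (Walk.cons s w).lastHead := by
  cases w <;> rfl

lemma openFrom_append {C A : Set V} {a b c : V} (w₁ : Walk G a b) (w₂ : Walk G b c) (h : Bool) :
    openFrom C A h (w₁.append w₂) ↔
      openFrom C A h w₁ ∧ openFrom C A (w₁.lastHeadD h) w₂ := by
  induction w₁ generalizing h with
  | nil => simp [openFrom]
  | cons s w ih =>
      rw [cons_append]
      show (_ ∧ openFrom C A s.headEnd (w.append w₂)) ↔ _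
      rw [ih]
      show _ ↔ (_ ∧ openFrom C A s.headEnd w) ∧ openFrom C A (lastHeadD h (Walk.cons s w)) w₂
      have : lastHeadD h (Walk.cons s w) = lastHeadD s.headEnd w := by
        rw [lastHeadD_cons]; rfl
      rw [this, and_assoc]

lemma allCollFrom_append {a b c : V} (w₁ : Walk G a b) (w₂ : Walk G b c) (h : Bool) :
    allCollFrom h (w₁.append w₂) ↔
      allCollFrom h w₁ ∧ allCollFrom (w₁.lastHeadD h) w₂ := by
  induction w₁ generalizing h with
  | nil => simp [allCollFrom]
  | cons s w ih =>
      rw [cons_append]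
      show (_ ∧ allCollFrom s.headEnd (w.append w₂)) ↔ _
      rw [ih]
      show _ ↔ (_ ∧ allCollFrom s.headEnd w) ∧ allCollFrom (lastHeadD h (Walk.cons s w)) w₂
      have : lastHeadD h (Walk.cons s w) = lastHeadD s.headEnd w := by
        rw [lastHeadD_cons]; rfl
      rw [this, and_assoc]

@[simp] lemma interior_cons {a b c : V} (s : Step G a b) (w : Walk G b c) :
    (Walk.cons s w).interior = w.nodes.dropLast := by
  simp [interior, List.dropLast_cons_of_ne_nil (nodes_ne_nil w)]

lemma dropLast_nodes_of_nontrivial {a b : V} {w : Walk G a b} (hw : w.Nontrivial) :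
    w.nodes.dropLast = a :: w.interior := by
  cases w with
  | nil => exact absurd hw not_nontrivial_nil
  | cons s w' =>
      simp [List.dropLast_cons_of_ne_nil (nodes_ne_nil w')]

lemma interior_subset_nodes {a b : V} (w : Walk G a b) : ∀ x ∈ w.interior, x ∈ w.nodes := by
  intro x hx
  have h1 : x ∈ w.nodes.dropLast := List.mem_of_mem_drop hx
  exact List.dropLast_subset _ h1

lemma dropLast_nodes_append {a b c : V} (w₁ : Walk G a b) (w₂ : Walk G b c) :
    (w₁.append w₂).nodes.dropLast = w₁.nodes.dropLast ++ w₂.nodes.dropLast := by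
  rw [nodes_append, List.dropLast_append_of_ne_nil (nodes_ne_nil w₂)]

lemma interior_append {a b c : V} {w₁ : Walk G a b} {w₂ : Walk G b c}
    (h₁ : w₁.Nontrivial) (h₂ : w₂.Nontrivial) :
    (w₁.append w₂).interior = w₁.interior ++ b :: w₂.interior := by
  have hh : (w₁.append w₂).nodes.dropLast = (a :: w₁.interior) ++ (b :: w₂.interior) := by
    rw [dropLast_nodes_append, dropLast_nodes_of_nontrivial h₁, dropLast_nodes_of_nontrivial h₂]
  have hnt : (w₁.append w₂).Nontrivial := h₁.append_left _
  have := dropLast_nodes_of_nontrivial hnt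
  rw [hh] at this
  have : a :: (w₁.append w₂).interior = a :: (w₁.interior ++ b :: w₂.interior) := by
    rw [← this]; rfl
  exact (List.cons_injective.eq_iff.mp this)

end Walk

end DMG
end Aux

section AuxB
namespace DMG

variable {V : Type u} {G : DMG V}

/-- Nonempty directed paths (as sequences of directed edges). -/
inductive Dip (G : DMG V) : V → V → Type u
  | single : ∀ {x y : V}, G.dir x y → Dip G x y
  | cons : ∀ {x m y : V}, G.dir x m → Dip G m y → Dip G x y

namespace Dip

def nodes : ∀ {x y : V}, Dip G x y → List V
  | x, y, .single _ => [x, y]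
  | x, _, .cons _ d => x :: d.nodes

@[simp] lemma nodes_single {x y : V} (h : G.dir x y) : (Dip.single h).nodes = [x, y] := rfl
@[simp] lemma nodes_cons {x m y : V} (h : G.dir x m) (d : Dip G m y) :
    (Dip.cons h d).nodes = x :: d.nodes := rfl

lemma nodes_ne_nil {x y : V} (d : Dip G x y) : d.nodes ≠ [] := by
  cases d <;> simp

lemma nodes_head {x y : V} (d : Dip G x y) : d.nodes = x :: d.nodes.tail := by
  cases d <;> rfl

lemma start_mem_nodes {x y : V} (d : Dip G x y) : x ∈ d.nodes := by
  rw [nodes_head]; exact List.mem_cons_self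

lemma nodes_eq_dropLast_append {x y : V} (d : Dip G x y) :
    d.nodes = d.nodes.dropLast ++ [y] := by
  induction d with
  | single h => rfl
  | cons h d ih =>
      simp only [nodes_cons, List.dropLast_cons_of_ne_nil (nodes_ne_nil d)]
      rw [List.cons_append, ← ih]

lemma start_mem_dropLast {x y : V} (d : Dip G x y) : x ∈ d.nodes.dropLast := by
  induction d with
  | single h => simp
  | cons h d ih =>
      simp [List.dropLast_cons_of_ne_nil (nodes_ne_nil d)]

lemma end_not_mem_dropLast {x y : V} {d : Dip G x y} (hd : d.nodes.Nodup) :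
    y ∉ d.nodes.dropLast := by
  intro hy
  have := d.nodes_eq_dropLast_append
  rw [this] at hd
  rcases List.nodup_append.1 hd with ⟨-, -, hdisj⟩
  exact hdisj y hy y (List.mem_singleton_self y) rfl

lemma anc_of_mem {x y : V} (d : Dip G x y) : ∀ n ∈ d.nodes, G.anc x n := by
  induction d with
  | single h =>
      intro n hn
      rcases List.mem_pair.1 hn with rfl | rfl
      · exact Relation.ReflTransGen.refl
      · exact Relation.ReflTransGen.single h
  | cons h d ih =>
      intro n hn
      rcases List.mem_cons.1 hn with rfl | hn
      · exact Relation.ReflTransGen.refl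
      · exact Relation.ReflTransGen.head h (ih n hn)

def toWalk : ∀ {x y : V}, Dip G x y → Walk G x y
  | _, _, .single h => .cons (.dirF h) (.nil _)
  | _, _, .cons h d => .cons (.dirF h) d.toWalk

def toRevWalk : ∀ {x y : V}, Dip G x y → Walk G y x
  | _, _, .single h => .cons (.dirB h) (.nil _)
  | _, _, .cons h d => d.toRevWalk.append (.cons (.dirB h) (.nil _))

lemma toWalk_nontrivial {x y : V} (d : Dip G x y) : d.toWalk.Nontrivial := by
  cases d <;> exact trivial

lemma toRevWalk_nontrivial {x y : V} (d : Dip G x y) : d.toRevWalk.Nontrivial := by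
  induction d with
  | single h => exact trivial
  | cons h d ih => exact Walk.Nontrivial.append_left ih _

@[simp] lemma nodes_toWalk {x y : V} (d : Dip G x y) : d.toWalk.nodes = d.nodes := by
  induction d with
  | single h => rfl
  | cons h d ih => simp [toWalk, ih]

@[simp] lemma nodes_toRevWalk {x y : V} (d : Dip G x y) :
    d.toRevWalk.nodes = d.nodes.reverse := by
  induction d with
  | single h => rfl
  | cons h d ih =>
      rw [toRevWalk, Walk.nodes_append, ih, nodes_cons, nodes_head d]
      simp

@[simp] lemma firstHead_toWalk {x y : V} (d : Dip G x y) : d.toWalk.firstHead = false := by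
  cases d <;> rfl

@[simp] lemma lastHead_toWalk {x y : V} (d : Dip G x y) : d.toWalk.lastHead = true := by
  induction d with
  | single h => rfl
  | cons h d ih =>
      rw [toWalk, Walk.lastHead_cons_of_nontrivial _ (toWalk_nontrivial d), ih]

@[simp] lemma firstHead_toRevWalk {x y : V} (d : Dip G x y) :
    d.toRevWalk.firstHead = true := by
  induction d with
  | single h => rfl
  | cons h d ih =>
      rw [toRevWalk, Walk.firstHead_append (toRevWalk_nontrivial d), ih]

@[simp] lemma lastHead_toRevWalk {x y : V} (d : Dip G x y) :
    d.toRevWalk.lastHead = false := by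
  cases d with
  | single h => rfl
  | cons h d =>
      rw [toRevWalk, Walk.lastHead_append _ (Walk.nontrivial_cons _ _), Walk.lastHead_cons_nil]
      rfl

lemma of_anc {x y : V} (h : G.anc x y) (hne : x ≠ y) : Nonempty (Dip G x y) := by
  induction h using Relation.ReflTransGen.head_induction_on with
  | refl => exact absurd rfl hne
  | head h' hrest ih =>
      rename_i u c
      by_cases hc : c = y
      · subst hc; exact ⟨Dip.single h'⟩
      · exact ⟨Dip.cons h' (ih hc).some⟩

lemma suffix {x y : V} (d : Dip G x y) :
    ∀ n ∈ d.nodes, n ≠ y → ∃ d' : Dip G n y, d'.nodes <:+ d.nodes := by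
  induction d with
  | single h =>
      intro n hn hne
      rcases List.mem_pair.1 hn with rfl | rfl
      · exact ⟨Dip.single h, List.suffix_refl _⟩
      · exact absurd rfl hne
  | cons h d ih =>
      intro n hn hne
      rcases List.mem_cons.1 hn with rfl | hn
      · exact ⟨Dip.cons h d, List.suffix_refl _⟩
      · obtain ⟨d', hd'⟩ := ih n hn hne
        exact ⟨d', hd'.trans (List.suffix_cons _ _)⟩

lemma trim (S : Set V) {x y : V} (d : Dip G x y) :
    x ∉ S → y ∈ S → ∃ (w : V) (d' : Dip G x w), w ∈ S ∧ d'.nodes.Nodup ∧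
      (∀ n ∈ d'.nodes, n ∈ S → n = w) ∧ (∀ n ∈ d'.nodes, n ∈ d.nodes) := by
  induction d with
  | single h =>
      rename_i x y
      intro hx hy
      refine ⟨y, Dip.single h, hy, ?_, ?_, fun n hn => hn⟩
      · simp only [nodes_single]
        exact List.nodup_cons.2 ⟨by simp only [List.mem_singleton]
                                    exact fun he => hx (he ▸ hy), List.nodup_singleton _⟩
      · intro n hn hnS
        rcases List.mem_pair.1 hn with rfl | rfl
        · exact absurd hnS hx
        · rfl
  | cons h d ih =>
      rename_i x m y
      intro hx hy
      by_cases hm : m ∈ S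
      · refine ⟨m, Dip.single h, hm, ?_, ?_, ?_⟩
        · simp only [nodes_single]
          exact List.nodup_cons.2 ⟨by simp only [List.mem_singleton]
                                      exact fun he => hx (he ▸ hm), List.nodup_singleton _⟩
        · intro n hn hnS
          rcases List.mem_pair.1 hn with rfl | rfl
          · exact absurd hnS hx
          · rfl
        · intro n hn
          rcases List.mem_pair.1 hn with rfl | rfl
          · exact List.mem_cons_self
          · exact List.mem_cons_of_mem _ d.start_mem_nodes
      · obtain ⟨w, d₂, hw, hnd₂, hP₂, hsub₂⟩ := ih hm hy
        by_cases hx2 : x ∈ d₂.nodes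
        · have hxw : x ≠ w := fun he => hx (he ▸ hw)
          obtain ⟨d₃, hd₃⟩ := d₂.suffix x hx2 hxw
          refine ⟨w, d₃, hw, hnd₂.sublist hd₃.sublist, ?_, ?_⟩
          · intro n hn hnS
            exact hP₂ n (hd₃.sublist.subset hn) hnS
          · intro n hn
            exact List.mem_cons_of_mem _ (hsub₂ n (hd₃.sublist.subset hn))
        · refine ⟨w, Dip.cons h d₂, hw, ?_, ?_, ?_⟩
          · exact List.nodup_cons.2 ⟨hx2, hnd₂⟩
          · intro n hn hnS
            rcases List.mem_cons.1 hn with rfl | hn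
            · exact absurd hnS hx
            · exact hP₂ n hn hnS
          · intro n hn
            rcases List.mem_cons.1 hn with rfl | hn
            · exact List.mem_cons_self
            · exact List.mem_cons_of_mem _ (hsub₂ n hn)

lemma lastMem {x b : V} (d : Dip G x b) (P : V → Prop) :
    ¬ P b → ((∀ n ∈ d.nodes, ¬ P n) ∨
      ∃ y, P y ∧ ∃ d' : Dip G y b, d'.nodes <:+ d.nodes ∧
        ∀ n ∈ d'.nodes, P n → n = y) := by
  classical
  induction d with
  | single h =>
      rename_i x b
      intro hb
      by_cases hx : P x
      · refine Or.inr ⟨x, hx, Dip.single h, List.suffix_refl _, ?_⟩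
        intro n hn hPn
        rcases List.mem_pair.1 hn with rfl | rfl
        · rfl
        · exact absurd hPn hb
      · refine Or.inl ?_
        intro n hn
        rcases List.mem_pair.1 hn with rfl | rfl
        · exact hx
        · exact hb
  | cons h d ih =>
      rename_i x m b
      intro hb
      rcases ih hb with hall | ⟨y, hy, d', hsuf, huniq⟩
      · by_cases hx : P x
        · refine Or.inr ⟨x, hx, Dip.cons h d, List.suffix_refl _, ?_⟩
          intro n hn hPn
          rcases List.mem_cons.1 hn with rfl | hn
          · rfl
          · exact absurd hPn (hall n hn)
        · refine Or.inl ?_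
          intro n hn
          rcases List.mem_cons.1 hn with rfl | hn
          · exact hx
          · exact hall n hn
      · exact Or.inr ⟨y, hy, d', hsuf.trans (List.suffix_cons _ _), huniq⟩

end Dip

lemma mem_anSet_of_anc {C : Set V} {x n : V} (h : G.anc x n) (hn : n ∈ G.anSet C) :
    x ∈ G.anSet C := by
  obtain ⟨c, hc, hnc⟩ := hn
  exact ⟨c, hc, h.trans hnc⟩

lemma mem_anSet_of_mem {C : Set V} {n : V} (hn : n ∈ C) : n ∈ G.anSet C :=
  ⟨n, hn, Relation.ReflTransGen.refl⟩

end DMG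
end AuxB

section AuxC
namespace DMG

variable {V : Type u} {G : DMG V}

namespace Walk

lemma openFrom_of_allCollFrom {C A : Set V} :
    ∀ {u v : V} (w : Walk G u v) (h : Bool), allCollFrom h w →
      (∀ x ∈ w.nodes.dropLast, x ∈ A) → openFrom C A h w := by
  intro u v w
  induction w with
  | nil => intro h _ _; exact trivial
  | cons s w ih =>
      intro h hc hA
      obtain ⟨h1, h2⟩ := hc
      refine ⟨?_, ih s.headEnd h2 ?_⟩
      · rw [h1]
        simp only [if_true]
        apply hA
        rw [dropLast_nodes_of_nontrivial (nontrivial_cons s w)]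
        exact List.mem_cons_self
      · intro x hx
        apply hA
        rw [dropLast_nodes_of_nontrivial (nontrivial_cons s w), interior_cons]
        exact List.mem_cons_of_mem _ hx

lemma openMid {C A : Set V} {u v : V} (w : Walk G u v) (hcol : w.AllColliders)
    (hint : ∀ x ∈ w.interior, x ∈ A) (hu : u ∉ C) : openFrom C A false w := by
  cases w with
  | nil => exact trivial
  | cons s w' =>
      refine ⟨by simp [hu], ?_⟩
      refine openFrom_of_allCollFrom w' s.headEnd hcol ?_
      intro x hx
      exact hint x (by rwa [interior_cons])

end Walk

namespace Dip

lemma openFwd {C A : Set V} {x y : V} (d : Dip G x y) (hC : ∀ n ∈ d.nodes, n ∉ C) :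
    ∀ h : Bool, Walk.openFrom C A h d.toWalk := by
  induction d with
  | single h' =>
      intro h
      exact ⟨by simp [hC _ (start_mem_nodes _), Step.headStart], trivial⟩
  | cons h' d ih =>
      intro h
      refine ⟨by simp [hC _ (start_mem_nodes _), Step.headStart], ?_⟩
      exact ih (fun n hn => hC n (List.mem_cons_of_mem _ hn)) _

lemma openRev {C A : Set V} {x y : V} (d : Dip G x y) (hC : ∀ n ∈ d.nodes, n ∉ C) :
    Walk.openFrom C A false d.toRevWalk := by
  induction d with
  | single h' =>
      rename_i x y
      refine ⟨?_, trivial⟩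
      have hy : y ∉ C := hC y (by simp)
      simp [Step.headStart, hy]
  | cons h' d ih =>
      rename_i x m y
      rw [toRevWalk, Walk.openFrom_append]
      refine ⟨ih (fun n hn => hC n (List.mem_cons_of_mem _ hn)), ?_⟩
      rw [Walk.lastHeadD_of_nontrivial _ (toRevWalk_nontrivial d), lastHead_toRevWalk]
      refine ⟨?_, trivial⟩
      have hm : m ∉ C := hC m (by rw [nodes_cons]; exact List.mem_cons_of_mem _ (start_mem_nodes d))
      simp [Step.headStart, hm]

end Dip

lemma Walk.muConn_iff {C : Set V} {a b : V} (w : Walk G a b) (hw : w.Nontrivial) :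
    w.MuConn C ↔ (Walk.openFrom C (G.anSet C) false w ∧ w.lastHead = true) := by
  cases w with
  | nil => exact absurd hw Walk.not_nontrivial_nil
  | cons s w' =>
      show (_ ∧ _ ∧ _) ↔ ((_ ∧ _) ∧ _)
      simp only [Bool.false_and, Bool.false_eq_true, if_false]
      tauto

lemma Walk.muConn_nontrivial {C : Set V} {a b : V} {w : Walk G a b} (h : w.MuConn C) :
    w.Nontrivial := by
  cases w with
  | nil => exact h.elim
  | cons s w' => exact trivial

lemma Walk.allColliders_append {u z v : V} {w₁ : Walk G u z} {w₂ : Walk G z v}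
    (h₁ : w₁.Nontrivial) (h₂ : w₂.Nontrivial) (hc : (w₁.append w₂).AllColliders) :
    w₁.lastHead = true ∧ w₁.AllColliders ∧ w₂.AllColliders := by
  cases w₁ with
  | nil => exact absurd h₁ not_nontrivial_nil
  | cons s w₁₀ =>
      rw [cons_append] at hc
      have hc' : allCollFrom s.headEnd (w₁₀.append w₂) := hc
      rw [allCollFrom_append, lastHeadD_cons] at hc'
      obtain ⟨hL, hR⟩ := hc'
      cases w₂ with
      | nil => exact absurd h₂ not_nontrivial_nil
      | cons t w₂₀ =>
          obtain ⟨hcol, hrest⟩ := hR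
          refine ⟨?_, hL, hrest⟩
          have := hcol
          simp only [Bool.and_eq_true] at this
          exact this.1

/-- Find the first non-`good` interior node, splitting the walk there. -/
lemma Walk.split_first (good : V → Prop) :
    ∀ {u v : V} (w : Walk G u v),
      (∀ x ∈ w.interior, good x) ∨
        ∃ (z : V) (π : Walk G u z) (ρ : Walk G z v), w = π.append ρ ∧
          π.Nontrivial ∧ ρ.Nontrivial ∧ ¬ good z ∧ ∀ x ∈ π.interior, good x := by
  classical
  intro u v w
  induction w with
  | nil => exact Or.inl (by simp [interior])
  | cons s w' ih =>
      rename_i u m v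
      cases w' with
      | nil => exact Or.inl (by simp [interior])
      | cons t w'' =>
          by_cases hg : good m
          · rcases ih with hall | ⟨z, π, ρ, heq, hπ, hρ, hz, hπg⟩
            · refine Or.inl ?_
              rw [interior_cons, dropLast_nodes_of_nontrivial (nontrivial_cons t w'')]
              intro x hx
              rcases List.mem_cons.1 hx with rfl | hx
              · exact hg
              · exact hall x hx
            · refine Or.inr ⟨z, Walk.cons s π, ρ, by rw [heq]; rfl, trivial, hρ, hz, ?_⟩
              rw [interior_cons, dropLast_nodes_of_nontrivial hπ]
              intro x hx
              rcases List.mem_cons.1 hx with rfl | hx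
              · exact hg
              · exact hπg x hx
          · refine Or.inr ⟨m, Walk.cons s (Walk.nil m), Walk.cons t w'', rfl, trivial,
              trivial, hg, ?_⟩
            simp [interior]

def Walk.length : ∀ {a b : V}, Walk G a b → ℕ
  | _, _, .nil _ => 0
  | _, _, .cons _ w => w.length + 1

lemma Walk.length_append {a b c : V} (w₁ : Walk G a b) (w₂ : Walk G b c) :
    (w₁.append w₂).length = w₁.length + w₂.length := by
  induction w₁ with
  | nil => simp [Walk.length]
  | cons s w ih => simp [Walk.length, ih]; omega

lemma Walk.length_pos_of_nontrivial {a b : V} {w : Walk G a b} (h : w.Nontrivial) :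
    1 ≤ w.length := by
  cases w with
  | nil => exact absurd h not_nontrivial_nil
  | cons s w' => simp [Walk.length]

/-- Master decomposition scan. -/
lemma Walk.master {u v : V} (w : Walk G u v) (good A B : V → Prop)
    (hyp : ∀ x ∈ w.interior, good x ∨ B x ∨ A x) :
    (∀ x ∈ w.interior, good x) ∨
    (∃ (z : V) (π : Walk G u z) (ρ : Walk G z v), w = π.append ρ ∧
      π.Nontrivial ∧ ρ.Nontrivial ∧ ¬ good z ∧ B z ∧ ∀ x ∈ π.interior, good x) ∨
    (∃ (z : V) (π : Walk G u z) (ρ : Walk G z v), w = π.append ρ ∧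
      π.Nontrivial ∧ ρ.Nontrivial ∧ ¬ good z ∧ A z ∧ ∀ x ∈ ρ.interior, good x) ∨
    (∃ (y z : V) (π : Walk G u y) (μ : Walk G y z) (ρ : Walk G z v),
      w = π.append (μ.append ρ) ∧ π.Nontrivial ∧ μ.Nontrivial ∧ ρ.Nontrivial ∧
      ¬ good y ∧ ¬ good z ∧ A y ∧ B z ∧ ∀ x ∈ μ.interior, good x) := by
  classical
  suffices H : ∀ (n : ℕ) {u v : V} (w : Walk G u v), w.length ≤ n →
      (∀ x ∈ w.interior, good x ∨ B x ∨ A x) →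
      (∀ x ∈ w.interior, good x) ∨
      (∃ (z : V) (π : Walk G u z) (ρ : Walk G z v), w = π.append ρ ∧
        π.Nontrivial ∧ ρ.Nontrivial ∧ ¬ good z ∧ B z ∧ ∀ x ∈ π.interior, good x) ∨
      (∃ (z : V) (π : Walk G u z) (ρ : Walk G z v), w = π.append ρ ∧
        π.Nontrivial ∧ ρ.Nontrivial ∧ ¬ good z ∧ A z ∧ ∀ x ∈ ρ.interior, good x) ∨
      (∃ (y z : V) (π : Walk G u y) (μ : Walk G y z) (ρ : Walk G z v),
        w = π.append (μ.append ρ) ∧ π.Nontrivial ∧ μ.Nontrivial ∧ ρ.Nontrivial ∧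
        ¬ good y ∧ ¬ good z ∧ A y ∧ B z ∧ ∀ x ∈ μ.interior, good x) by
    exact H w.length w le_rfl hyp
  intro n
  induction n with
  | zero =>
      intro u v w hlen hyp'
      rcases Walk.split_first good w with hall | ⟨z, π, ρ, heq, hπ, hρ, hz, hπg⟩
      · exact Or.inl hall
      · exfalso
        have := Walk.length_pos_of_nontrivial hπ
        have := Walk.length_pos_of_nontrivial hρ
        have := Walk.length_append π ρ
        rw [← heq] at this
        omega
  | succ n ihn =>
      intro u v w hlen hyp'
      rcases Walk.split_first good w with hall | ⟨z, π, ρ, heq, hπ, hρ, hz, hπg⟩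
      · exact Or.inl hall
      · have hzint : z ∈ w.interior := by
          rw [heq, interior_append hπ hρ]
          exact List.mem_append_right _ (List.mem_cons_self)
        have hρsub : ∀ x ∈ ρ.interior, x ∈ w.interior := by
          intro x hx
          rw [heq, interior_append hπ hρ]
          exact List.mem_append_right _ (List.mem_cons_of_mem _ hx)
        rcases hyp' z hzint with hgz | hBz | hAz
        · exact absurd hgz hz
        · exact Or.inr (Or.inl ⟨z, π, ρ, heq, hπ, hρ, hz, hBz, hπg⟩)
        · -- recurse on ρ
          have hρlen : ρ.length ≤ n := by
            have h1 := Walk.length_pos_of_nontrivial hπ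
            have h2 := Walk.length_append π ρ
            rw [← heq] at h2
            omega
          rcases ihn ρ hρlen (fun x hx => hyp' x (hρsub x hx)) with
            hall₂ | ⟨z₂, π₂, ρ₂, heq₂, hπ₂, hρ₂, hz₂, hB₂, hg₂⟩ |
            ⟨z₂, π₂, ρ₂, heq₂, hπ₂, hρ₂, hz₂, hA₂, hg₂⟩ |
            ⟨y₂, z₂, π₂, μ₂, ρ₂, heq₂, hπ₂, hμ₂, hρ₂, hy₂, hz₂, hA₂, hB₂, hg₂⟩
          · exact Or.inr (Or.inr (Or.inl ⟨z, π, ρ, heq, hπ, hρ, hz, hAz, hall₂⟩))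
          · exact Or.inr (Or.inr (Or.inr ⟨z, z₂, π, π₂, ρ₂, by rw [heq, heq₂], hπ, hπ₂,
              hρ₂, hz, hz₂, hAz, hB₂, hg₂⟩))
          · refine Or.inr (Or.inr (Or.inl ⟨z₂, π.append π₂, ρ₂, ?_, hπ.append_left _,
              hρ₂, hz₂, hA₂, hg₂⟩))
            rw [heq, heq₂, Walk.append_assoc]
          · refine Or.inr (Or.inr (Or.inr ⟨y₂, z₂, π.append π₂, μ₂, ρ₂, ?_,
              hπ.append_left _, hμ₂, hρ₂, hy₂, hz₂, hA₂, hB₂, hg₂⟩))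
            rw [heq, heq₂, Walk.append_assoc]

end DMG
end AuxC

section AuxD
namespace DMG

variable {V : Type u} {G : DMG V}

lemma List.revDropLast (l : List V) : l.reverse.dropLast = l.tail.reverse := by
  cases l with
  | nil => simp
  | cons a t => simp [List.reverse_cons, List.dropLast_concat]

lemma List.sufDropSub {l₁ l₂ : List V} (h : l₁ <:+ l₂) : l₁.dropLast ⊆ l₂.dropLast := by
  obtain ⟨t, rfl⟩ := h
  cases l₁ with
  | nil => simp
  | cons a l =>
      rw [List.dropLast_append_of_ne_nil (by simp)]
      exact fun x hx => List.mem_append_right _ hx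

lemma star {C : Set V} {a b x : V} (hC : a ∉ C) (hxA : x ∉ G.anSet C)
    (da : Dip G x a) (db : Dip G x b)
    (hda : da.nodes.Nodup) (hdb : db.nodes.Nodup)
    (hadb : a ∉ db.nodes.dropLast) (hbda : b ∉ da.nodes.dropLast) :
    ∃ w : Walk G a b, w.MuConn C ∧ w.nodes.dropLast.Nodup ∧
      (a ≠ b → b ∉ w.nodes.dropLast) ∧ w.firstHead = true := by
  classical
  have notC : ∀ n, G.anc x n → n ∉ C := fun n h hc =>
    hxA (mem_anSet_of_anc h (mem_anSet_of_mem hc))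
  rcases db.lastMem (fun n => n ∈ da.nodes.dropLast) hbda with hall | ⟨y, hy, db', hsuf, huniq⟩
  · exact absurd da.start_mem_dropLast (hall x db.start_mem_nodes)
  · have hynea : y ≠ a := fun he => (Dip.end_not_mem_dropLast hda) (he ▸ hy)
    obtain ⟨da', hsufa⟩ := da.suffix y (List.dropLast_subset _ hy) hynea
    have hda'sub : ∀ n ∈ da'.nodes, n ∈ da.nodes := fun n hn => hsufa.sublist.subset hn
    have hdb'sub : ∀ n ∈ db'.nodes, n ∈ db.nodes := fun n hn => hsuf.sublist.subset hn
    have hda'nd : da'.nodes.Nodup := hda.sublist hsufa.sublist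
    have hdb'nd : db'.nodes.Nodup := hdb.sublist hsuf.sublist
    refine ⟨da'.toRevWalk.append db'.toWalk, ?_, ?_, ?_, ?_⟩
    · rw [Walk.muConn_iff _ ((Dip.toRevWalk_nontrivial da').append_left _)]
      constructor
      · rw [Walk.openFrom_append]
        refine ⟨Dip.openRev da' (fun n hn => notC n (da.anc_of_mem n (hda'sub n hn))), ?_⟩
        rw [Walk.lastHeadD_of_nontrivial _ (Dip.toRevWalk_nontrivial da'),
          Dip.lastHead_toRevWalk]
        exact Dip.openFwd db' (fun n hn => notC n (db.anc_of_mem n (hdb'sub n hn))) false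
      · rw [Walk.lastHead_append _ (Dip.toWalk_nontrivial db'), Dip.lastHead_toWalk]
    · rw [Walk.dropLast_nodes_append, Dip.nodes_toRevWalk, Dip.nodes_toWalk,
        List.revDropLast]
      rw [List.nodup_append]
      refine ⟨by rw [List.nodup_reverse]; exact hda'nd.sublist (List.tail_sublist _),
        hdb'nd.sublist (List.dropLast_sublist _), ?_⟩
      intro u hu y_ hu2 hy_
      subst y_
      have hu1 : u ∈ da'.nodes.tail := List.mem_reverse.1 hu
      have hu1' : u ∈ da.nodes := hda'sub u (List.mem_of_mem_tail hu1)
      have hu2' : u ∈ db'.nodes := List.dropLast_subset _ hu2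
      rw [da.nodes_eq_dropLast_append] at hu1'
      rcases List.mem_append.1 hu1' with hmem | hmem
      · have := huniq u hu2' hmem
        subst this
        rw [Dip.nodes_head da'] at hda'nd
        exact (List.nodup_cons.1 hda'nd).1 hu1
      · rw [List.mem_singleton] at hmem
        subst hmem
        exact hadb (List.sufDropSub hsuf hu2)
    · intro hne hmem
      rw [Walk.dropLast_nodes_append, Dip.nodes_toRevWalk, Dip.nodes_toWalk,
        List.revDropLast] at hmem
      rcases List.mem_append.1 hmem with hmem | hmem
      · have : b ∈ da.nodes := hda'sub b (List.mem_of_mem_tail (List.mem_reverse.1 hmem))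
        rw [da.nodes_eq_dropLast_append] at this
        rcases List.mem_append.1 this with h1 | h1
        · exact hbda h1
        · rw [List.mem_singleton] at h1
          exact hne h1.symm
      · exact Dip.end_not_mem_dropLast hdb'nd hmem
    · rw [Walk.firstHead_append (Dip.toRevWalk_nontrivial da'), Dip.firstHead_toRevWalk]

end DMG
end AuxD

section AuxE
namespace DMG

variable {V : Type u} {G : DMG V}

lemma bid_case {C : Set V} {a b : V} (ν : Walk G a b) (hC : a ∉ C)
    (hnt : ν.Nontrivial) (hdrop : ν.nodes.dropLast.Nodup)
    (hbmem : a ≠ b → b ∉ ν.nodes.dropLast)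
    (hlast : ν.lastHead = true) (hcoll : ν.AllColliders)
    (hanc : ∀ x ∈ ν.nodes, G.anc x a ∨ G.anc x b) :
    ∃ w : Walk G a b, w.MuConn C ∧ w.nodes.dropLast.Nodup ∧
      (a ≠ b → b ∉ w.nodes.dropLast) ∧
      (w.firstHead = ν.firstHead ∨ w.firstHead = true) := by
  classical
  set good : V → Prop := fun x => x ∈ G.anSet C with hgood
  set Atype : V → Prop := fun x => ∃ d : Dip G x a, d.nodes.Nodup ∧
    ∀ n ∈ d.nodes.dropLast, n ≠ a ∧ n ≠ b with hA
  set Btype : V → Prop := fun x => ∃ d : Dip G x b, d.nodes.Nodup ∧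
    ∀ n ∈ d.nodes.dropLast, n ≠ a ∧ n ≠ b with hB
  have hdl : ν.nodes.dropLast = a :: ν.interior := Walk.dropLast_nodes_of_nontrivial hnt
  have hintna : ∀ x ∈ ν.interior, x ≠ a := by
    intro x hx he
    rw [hdl] at hdrop
    exact (List.nodup_cons.1 hdrop).1 (he ▸ hx)
  have hintnb : ∀ x ∈ ν.interior, x ≠ b := by
    intro x hx he
    by_cases hab : a = b
    · exact hintna x hx (he.trans hab.symm)
    · exact hbmem hab (by rw [hdl]; exact List.mem_cons_of_mem _ (he ▸ hx))
  -- classify bad interior nodes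
  have hyp : ∀ x ∈ ν.interior, good x ∨ Btype x ∨ Atype x := by
    intro x hx
    by_cases hg : good x
    · exact Or.inl hg
    · have hxa := hintna x hx
      have hxb := hintnb x hx
      have key : ∀ t : V, (t = a ∨ t = b) → G.anc x t → Btype x ∨ Atype x := by
        intro t ht hanct
        have hxt : x ≠ t := by rcases ht with rfl | rfl; exact hxa; exact hxb
        obtain ⟨d⟩ := Dip.of_anc hanct hxt
        have htS : t ∈ ({a, b} : Set V) := by
          rcases ht with rfl | rfl
          · exact Set.mem_insert _ _
          · exact Set.mem_insert_of_mem _ rfl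
        obtain ⟨w₀, d', hw₀, hnd, hP, -⟩ := d.trim {a, b}
          (by intro hmem; rcases hmem with rfl | hmem
              · exact hxa rfl
              · exact hxb hmem) htS
        have hclean : ∀ n ∈ d'.nodes.dropLast, n ≠ a ∧ n ≠ b := by
          intro n hn
          have hnw : n ≠ w₀ := fun he => Dip.end_not_mem_dropLast hnd (he ▸ hn)
          constructor
          · intro he
            exact hnw (hP n (List.dropLast_subset _ hn) (by rw [he]; exact Set.mem_insert _ _))
          · intro he
            exact hnw (hP n (List.dropLast_subset _ hn)
              (by rw [he]; exact Set.mem_insert_of_mem _ rfl))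
        rcases hw₀ with rfl | hw₀
        · exact Or.inr ⟨d', hnd, hclean⟩
        · rw [Set.mem_singleton_iff] at hw₀
          subst hw₀
          exact Or.inl ⟨d', hnd, hclean⟩
      rcases hanc x (Walk.interior_subset_nodes ν x hx) with h1 | h1
      · exact Or.inr (key a (Or.inl rfl) h1)
      · exact Or.inr (key b (Or.inr rfl) h1)
  rcases Walk.master ν good Atype Btype hyp with
    hall | ⟨z, π, ρ, heq, hπ, hρ, hgz, hBz, hπg⟩ |
    ⟨z, π, ρ, heq, hπ, hρ, hgz, hAz, hρg⟩ |
    ⟨y, z, π, μ, ρ, heq, hπ, hμ, hρ, hgy, hgz, hAy, hBz, hμg⟩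
  · -- all interior nodes good : use ν itself
    refine ⟨ν, ?_, hdrop, hbmem, Or.inl rfl⟩
    rw [Walk.muConn_iff _ hnt]
    exact ⟨Walk.openMid ν hcoll hall hC, hlast⟩
  · -- prefix ν[a..z] ++ dipath z→b
    subst heq
    obtain ⟨p, hpnd, hpclean⟩ := hBz
    obtain ⟨hπlast, hπcoll, hρcoll⟩ := Walk.allColliders_append hπ hρ hcoll
    have pnotA : ∀ n ∈ p.nodes, n ∉ G.anSet C := fun n hn hAn =>
      hgz (mem_anSet_of_anc (p.anc_of_mem n hn) hAn)
    have pnotC : ∀ n ∈ p.nodes, n ∉ C := fun n hn hc => pnotA n hn (mem_anSet_of_mem hc)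
    have hπdl : π.nodes.dropLast = a :: π.interior := Walk.dropLast_nodes_of_nontrivial hπ
    rw [Walk.dropLast_nodes_append] at hdrop hbmem
    refine ⟨π.append p.toWalk, ?_, ?_, ?_, ?_⟩
    · rw [Walk.muConn_iff _ (hπ.append_left _)]
      constructor
      · rw [Walk.openFrom_append]
        refine ⟨Walk.openMid π hπcoll hπg hC, ?_⟩
        rw [Walk.lastHeadD_of_nontrivial _ hπ, hπlast]
        exact Dip.openFwd p pnotC true
      · rw [Walk.lastHead_append _ (Dip.toWalk_nontrivial p), Dip.lastHead_toWalk]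
    · rw [Walk.dropLast_nodes_append, Dip.nodes_toWalk, List.nodup_append]
      refine ⟨hdrop.of_append_left, hpnd.sublist (List.dropLast_sublist _), ?_⟩
      intro u hu1 y_ hu2 hy_
      subst y_
      rw [hπdl] at hu1
      rcases List.mem_cons.1 hu1 with rfl | hu1
      · exact (hpclean u hu2).1 rfl
      · exact pnotA u (List.dropLast_subset _ hu2) (hπg u hu1)
    · intro hne hmem
      rw [Walk.dropLast_nodes_append, Dip.nodes_toWalk] at hmem
      rcases List.mem_append.1 hmem with h1 | h1
      · exact hbmem hne (List.mem_append_left _ h1)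
      · exact (hpclean b h1).2 rfl
    · refine Or.inl ?_
      rw [Walk.firstHead_append hπ, Walk.firstHead_append hπ]
  · -- reversed dipath a←z ++ suffix ν[z..b]
    subst heq
    obtain ⟨q, hqnd, hqclean⟩ := hAz
    obtain ⟨hπlast, hπcoll, hρcoll⟩ := Walk.allColliders_append hπ hρ hcoll
    have qnotA : ∀ n ∈ q.nodes, n ∉ G.anSet C := fun n hn hAn =>
      hgz (mem_anSet_of_anc (q.anc_of_mem n hn) hAn)
    have qnotC : ∀ n ∈ q.nodes, n ∉ C := fun n hn hc => qnotA n hn (mem_anSet_of_mem hc)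
    have hznC : z ∉ C := fun hc => hgz (mem_anSet_of_mem hc)
    have hρlast : ρ.lastHead = true := by rwa [Walk.lastHead_append _ hρ] at hlast
    have hρdl : ρ.nodes.dropLast = z :: ρ.interior := Walk.dropLast_nodes_of_nontrivial hρ
    rw [Walk.dropLast_nodes_append, Walk.dropLast_nodes_of_nontrivial hπ] at hdrop hbmem
    have hadl : a ∉ π.interior ++ ρ.nodes.dropLast := by
      rw [List.cons_append] at hdrop
      exact (List.nodup_cons.1 hdrop).1
    refine ⟨q.toRevWalk.append ρ, ?_, ?_, ?_, Or.inr ?_⟩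
    · rw [Walk.muConn_iff _ ((Dip.toRevWalk_nontrivial q).append_left _)]
      constructor
      · rw [Walk.openFrom_append]
        refine ⟨Dip.openRev q qnotC, ?_⟩
        rw [Walk.lastHeadD_of_nontrivial _ (Dip.toRevWalk_nontrivial q),
          Dip.lastHead_toRevWalk]
        exact Walk.openMid ρ hρcoll hρg hznC
      · rw [Walk.lastHead_append _ hρ, hρlast]
    · rw [Walk.dropLast_nodes_append, Dip.nodes_toRevWalk, List.revDropLast,
        List.nodup_append]
      refine ⟨by rw [List.nodup_reverse]; exact hqnd.sublist (List.tail_sublist _),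
        (List.nodup_append.1 hdrop).2.1, ?_⟩
      intro u hu1 y_ hu2 hy_
      subst y_
      have hu1' : u ∈ q.nodes := List.mem_of_mem_tail (List.mem_reverse.1 hu1)
      by_cases hua : u = a
      · subst hua
        exact hadl (List.mem_append_right _ hu2)
      · rw [hρdl] at hu2
        rcases List.mem_cons.1 hu2 with rfl | hu2
        · rw [Dip.nodes_head q] at hqnd
          exact (List.nodup_cons.1 hqnd).1 (List.mem_reverse.1 hu1)
        · exact qnotA u hu1' (hρg u hu2)
    · intro hne hmem
      rw [Walk.dropLast_nodes_append, Dip.nodes_toRevWalk, List.revDropLast] at hmem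
      rcases List.mem_append.1 hmem with h1 | h1
      · have hb' : b ∈ q.nodes := List.mem_of_mem_tail (List.mem_reverse.1 h1)
        rw [q.nodes_eq_dropLast_append] at hb'
        rcases List.mem_append.1 hb' with h2 | h2
        · exact (hqclean b h2).2 rfl
        · exact hne (List.mem_singleton.1 h2).symm
      · exact hbmem hne (List.mem_cons_of_mem _ (List.mem_append_right _ h1))
    · rw [Walk.firstHead_append (Dip.toRevWalk_nontrivial q), Dip.firstHead_toRevWalk]
  · -- middle case : reversed dipath a←y ++ ν[y..z] ++ dipath z→b, or star
    subst heq
    obtain ⟨q, hqnd, hqclean⟩ := hAy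
    obtain ⟨p, hpnd, hpclean⟩ := hBz
    obtain ⟨hπlast, hπcoll, hμρcoll⟩ := Walk.allColliders_append hπ (hμ.append_left _) hcoll
    obtain ⟨hμlast, hμcoll, hρcoll⟩ := Walk.allColliders_append hμ hρ hμρcoll
    have qnotA : ∀ n ∈ q.nodes, n ∉ G.anSet C := fun n hn hAn =>
      hgy (mem_anSet_of_anc (q.anc_of_mem n hn) hAn)
    have qnotC : ∀ n ∈ q.nodes, n ∉ C := fun n hn hc => qnotA n hn (mem_anSet_of_mem hc)
    have pnotA : ∀ n ∈ p.nodes, n ∉ G.anSet C := fun n hn hAn =>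
      hgz (mem_anSet_of_anc (p.anc_of_mem n hn) hAn)
    have pnotC : ∀ n ∈ p.nodes, n ∉ C := fun n hn hc => pnotA n hn (mem_anSet_of_mem hc)
    have hynC : y ∉ C := fun hc => hgy (mem_anSet_of_mem hc)
    by_cases hclash : ∃ u, u ∈ q.nodes.dropLast ∧ u ∈ p.nodes.dropLast
    · obtain ⟨u, huq, hup⟩ := hclash
      obtain ⟨hua, hub⟩ := hqclean u huq
      have hunA : u ∉ G.anSet C := fun hAn =>
        hgy (mem_anSet_of_anc (q.anc_of_mem u (List.dropLast_subset _ huq)) hAn)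
      obtain ⟨da, hsa⟩ := q.suffix u (List.dropLast_subset _ huq) hua
      obtain ⟨db, hsb⟩ := p.suffix u (List.dropLast_subset _ hup) hub
      obtain ⟨w, h1, h2, h3, h4⟩ := star hC hunA da db (hqnd.sublist hsa.sublist)
        (hpnd.sublist hsb.sublist)
        (fun hmem => (hpclean a (List.sufDropSub hsb hmem)).1 rfl)
        (fun hmem => (hqclean b (List.sufDropSub hsa hmem)).2 rfl)
      exact ⟨w, h1, h2, h3, Or.inr h4⟩
    · push_neg at hclash
      have hμdl : μ.nodes.dropLast = y :: μ.interior := Walk.dropLast_nodes_of_nontrivial hμ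
      rw [Walk.dropLast_nodes_append, Walk.dropLast_nodes_append,
        Walk.dropLast_nodes_of_nontrivial hπ] at hdrop hbmem
      refine ⟨q.toRevWalk.append (μ.append p.toWalk), ?_, ?_, ?_, Or.inr ?_⟩
      · rw [Walk.muConn_iff _ ((Dip.toRevWalk_nontrivial q).append_left _)]
        constructor
        · rw [Walk.openFrom_append]
          refine ⟨Dip.openRev q qnotC, ?_⟩
          rw [Walk.lastHeadD_of_nontrivial _ (Dip.toRevWalk_nontrivial q),
            Dip.lastHead_toRevWalk, Walk.openFrom_append]
          refine ⟨Walk.openMid μ hμcoll hμg hynC, ?_⟩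
          rw [Walk.lastHeadD_of_nontrivial _ hμ, hμlast]
          exact Dip.openFwd p pnotC true
        · rw [Walk.lastHead_append _ (hμ.append_left _),
            Walk.lastHead_append _ (Dip.toWalk_nontrivial p), Dip.lastHead_toWalk]
      · rw [Walk.dropLast_nodes_append, Walk.dropLast_nodes_append,
          Dip.nodes_toRevWalk, Dip.nodes_toWalk, List.revDropLast, List.nodup_append]
        have hμdlnd : μ.nodes.dropLast.Nodup :=
          ((List.nodup_append.1 hdrop).2.1.of_append_left)
        refine ⟨by rw [List.nodup_reverse]; exact hqnd.sublist (List.tail_sublist _), ?_, ?_⟩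
        · rw [List.nodup_append]
          refine ⟨hμdlnd, hpnd.sublist (List.dropLast_sublist _), ?_⟩
          intro u hu1 y_ hu2 hy_
          subst y_
          rw [hμdl] at hu1
          rcases List.mem_cons.1 hu1 with rfl | hu1
          · exact hclash u q.start_mem_dropLast hu2
          · exact pnotA u (List.dropLast_subset _ hu2) (hμg u hu1)
        · intro u hu1 y_ hu2 hy_
          subst y_
          have hu1' : u ∈ q.nodes := List.mem_of_mem_tail (List.mem_reverse.1 hu1)
          have huqcases : u ∈ q.nodes.dropLast ∨ u = a := by
            rw [q.nodes_eq_dropLast_append] at hu1'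
            rcases List.mem_append.1 hu1' with h2 | h2
            · exact Or.inl h2
            · exact Or.inr (List.mem_singleton.1 h2)
          rcases List.mem_append.1 hu2 with h2 | h2
          · by_cases hua : u = a
            · have h2' : a ∈ μ.nodes.dropLast := hua ▸ h2
              have hdrop' : (a :: (π.interior ++ (μ.nodes.dropLast ++ ρ.nodes.dropLast))).Nodup := hdrop
              exact (List.nodup_cons.1 hdrop').1
                (List.mem_append_right _ (List.mem_append_left _ h2'))
            · rw [hμdl] at h2
              rcases List.mem_cons.1 h2 with rfl | h2
              · rw [Dip.nodes_head q] at hqnd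
                exact (List.nodup_cons.1 hqnd).1 (List.mem_reverse.1 hu1)
              · exact qnotA u hu1' (hμg u h2)
          · rcases huqcases with h3 | h3
            · exact hclash u h3 h2
            · subst h3
              exact (hpclean _ h2).1 rfl
      · intro hne hmem
        rw [Walk.dropLast_nodes_append, Walk.dropLast_nodes_append,
          Dip.nodes_toRevWalk, Dip.nodes_toWalk, List.revDropLast] at hmem
        rcases List.mem_append.1 hmem with h1 | h1
        · have hb' : b ∈ q.nodes := List.mem_of_mem_tail (List.mem_reverse.1 h1)
          rw [q.nodes_eq_dropLast_append] at hb'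
          rcases List.mem_append.1 hb' with h2 | h2
          · exact (hqclean b h2).2 rfl
          · exact hne (List.mem_singleton.1 h2).symm
        · rcases List.mem_append.1 h1 with h2 | h2
          · exact hbmem hne (List.mem_cons_of_mem _
              (List.mem_append_right _ (List.mem_append_left _ h2)))
          · exact (hpclean b h2).2 rfl
      · rw [Walk.firstHead_append (Dip.toRevWalk_nontrivial q), Dip.firstHead_toRevWalk]

end DMG
end AuxE

section AuxF
namespace DMG

variable {V : Type u} {G : DMG V}

lemma dir_case {C : Set V} {a b : V} (ν : Walk G a b) (hC : a ∉ C)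
    (hnt : ν.Nontrivial) (hdrop : ν.nodes.dropLast.Nodup)
    (hbmem : a ≠ b → b ∉ ν.nodes.dropLast)
    (hlast : ν.lastHead = true) (hcoll : ν.AllColliders)
    (hfh : ν.firstHead = false)
    (hint : ∀ x ∈ ν.interior, G.anc x b) :
    ∃ w : Walk G a b, w.MuConn C ∧ w.nodes.dropLast.Nodup ∧
      (a ≠ b → b ∉ w.nodes.dropLast) ∧ w.firstHead = ν.firstHead := by
  classical
  have hdl : ν.nodes.dropLast = a :: ν.interior := Walk.dropLast_nodes_of_nontrivial hnt
  have hintna : ∀ x ∈ ν.interior, x ≠ a := by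
    intro x hx he
    rw [hdl] at hdrop
    exact (List.nodup_cons.1 hdrop).1 (he ▸ hx)
  have hintnb : ∀ x ∈ ν.interior, x ≠ b := by
    intro x hx he
    by_cases hab : a = b
    · exact hintna x hx (he.trans hab.symm)
    · exact hbmem hab (by rw [hdl]; exact List.mem_cons_of_mem _ (he ▸ hx))
  rcases Walk.split_first (fun x => x ∈ G.anSet C) ν with hall | ⟨z, π, ρ, heq, hπ, hρ, hgz, hπg⟩
  · refine ⟨ν, ?_, hdrop, hbmem, rfl⟩
    rw [Walk.muConn_iff _ hnt]
    exact ⟨Walk.openMid ν hcoll hall hC, hlast⟩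
  · have hzint : z ∈ ν.interior := by
      rw [heq, Walk.interior_append hπ hρ]
      exact List.mem_append_right _ (List.mem_cons_self)
    have hza : z ≠ a := hintna z hzint
    have hzb : z ≠ b := hintnb z hzint
    have hancz : G.anc z b := hint z hzint
    obtain ⟨d⟩ := Dip.of_anc hancz hzb
    have dnotA : ∀ n ∈ d.nodes, n ∉ G.anSet C := fun n hn hAn =>
      hgz (mem_anSet_of_anc (d.anc_of_mem n hn) hAn)
    have dnotC : ∀ n ∈ d.nodes, n ∉ C := fun n hn hc => dnotA n hn (mem_anSet_of_mem hc)
    subst heq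
    obtain ⟨hπlast, hπcoll, hρcoll⟩ := Walk.allColliders_append hπ hρ hcoll
    by_cases hain : a ∈ d.nodes ∧ a ≠ b
    · -- a lies on the dipath : use a pure directed path from a to b
      obtain ⟨da, hsa⟩ := d.suffix a hain.1 hain.2
      obtain ⟨w₀, d', hw₀, hnd, hP, hsub⟩ := da.trim {b}
        (by simpa using hain.2) rfl
      rw [Set.mem_singleton_iff] at hw₀
      subst hw₀
      have d'notC : ∀ n ∈ d'.nodes, n ∉ C := fun n hn =>
        dnotC n (hsa.sublist.subset (hsub n hn))
      refine ⟨d'.toWalk, ?_, ?_, ?_, ?_⟩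
      · rw [Walk.muConn_iff _ (Dip.toWalk_nontrivial d')]
        exact ⟨Dip.openFwd d' d'notC false, Dip.lastHead_toWalk d'⟩
      · rw [Dip.nodes_toWalk]
        exact hnd.sublist (List.dropLast_sublist _)
      · intro hne hmem
        rw [Dip.nodes_toWalk] at hmem
        exact Dip.end_not_mem_dropLast hnd hmem
      · rw [Dip.firstHead_toWalk, hfh]
    · -- trim the dipath to the first hit of {a, b}; it must end at b
      obtain ⟨w₀, p, hw₀, hnd, hP, hsub⟩ := d.trim {a, b}
        (by intro hmem; rcases hmem with rfl | hmem
            · exact hza rfl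
            · exact hzb hmem) (Set.mem_insert_of_mem _ rfl)
      have hw₀b : w₀ = b := by
        rcases hw₀ with rfl | h
        · have haind : w₀ ∈ d.nodes := by
            apply hsub
            rw [p.nodes_eq_dropLast_append]
            exact List.mem_append_right _ (List.mem_singleton_self _)
          by_contra hne
          exact hain ⟨haind, hne⟩
        · exact Set.mem_singleton_iff.1 h
      have hw₀b' := hw₀b.symm
      subst hw₀b'
      have hpclean : ∀ n ∈ p.nodes.dropLast, n ≠ a ∧ n ≠ b := by
        intro n hn
        have hnw : n ≠ b := fun he => Dip.end_not_mem_dropLast hnd (he ▸ hn)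
        refine ⟨?_, hnw⟩
        intro he
        exact hnw (hP n (List.dropLast_subset _ hn) (by rw [he]; exact Set.mem_insert _ _))
      have pnotA : ∀ n ∈ p.nodes, n ∉ G.anSet C := fun n hn => dnotA n (hsub n hn)
      have pnotC : ∀ n ∈ p.nodes, n ∉ C := fun n hn => dnotC n (hsub n hn)
      have hπdl : π.nodes.dropLast = a :: π.interior := Walk.dropLast_nodes_of_nontrivial hπ
      rw [Walk.dropLast_nodes_append] at hdrop hbmem
      refine ⟨π.append p.toWalk, ?_, ?_, ?_, ?_⟩
      · rw [Walk.muConn_iff _ (hπ.append_left _)]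
        constructor
        · rw [Walk.openFrom_append]
          refine ⟨Walk.openMid π hπcoll hπg hC, ?_⟩
          rw [Walk.lastHeadD_of_nontrivial _ hπ, hπlast]
          exact Dip.openFwd p pnotC true
        · rw [Walk.lastHead_append _ (Dip.toWalk_nontrivial p), Dip.lastHead_toWalk]
      · rw [Walk.dropLast_nodes_append, Dip.nodes_toWalk, List.nodup_append]
        refine ⟨hdrop.of_append_left, hnd.sublist (List.dropLast_sublist _), ?_⟩
        intro u hu1 y_ hu2 hy_
        subst y_
        rw [hπdl] at hu1
        rcases List.mem_cons.1 hu1 with rfl | hu1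
        · exact (hpclean u hu2).1 rfl
        · exact pnotA u (List.dropLast_subset _ hu2) (hπg u hu1)
      · intro hne hmem
        rw [Walk.dropLast_nodes_append, Dip.nodes_toWalk] at hmem
        rcases List.mem_append.1 hmem with h1 | h1
        · exact hbmem hne (List.mem_append_left _ h1)
        · exact (hpclean b h1).2 rfl
      · rw [Walk.firstHead_append hπ, Walk.firstHead_append hπ]

end DMG
end AuxF

/-- Proposition 7: if `ν` is an inducing path from `a` to
`b`, then for every `C ⊆ V ∖ {a}` there is a μ-connecting walk from `a` to `b`
given `C` which is a path if `a ≠ b` and a cycle if `a = b`; moreover, if `ν`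
is bidirected or directed, it can be chosen endpoint-identical to `ν`. -/
theorem stmt7 {V : Type u} [Fintype V] (G : DMG V) (a b : V)
    (ν : DMG.Walk G a b) (hν : G.IsInducingPath ν) (C : Set V) (hC : a ∉ C) :
    ∃ w : DMG.Walk G a b, w.MuConn C ∧
      (a ≠ b → w.nodes.Nodup) ∧
      (a = b → w.nodes.dropLast.Nodup) ∧
      ((G.IsBidirectedIP ν ∨ G.IsDirectedIP ν) →
        w.firstHead = ν.firstHead ∧ w.lastHead = ν.lastHead) := by
  classical
  obtain ⟨hnt, hnd, hlast, hcoll, hanc⟩ := hν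
  have hdrop : ν.nodes.dropLast.Nodup := by
    rcases hnd with h | ⟨hab, h⟩
    · exact h.sublist (List.dropLast_sublist _)
    · exact h
  have hbmem : a ≠ b → b ∉ ν.nodes.dropLast := by
    intro hne hmem
    rcases hnd with h | ⟨hab, _⟩
    · rw [DMG.Walk.nodes_eq_dropLast_append ν] at h
      exact (List.nodup_append.1 h).2.2 _ hmem _ (List.mem_singleton_self _) rfl
    · exact hne hab
  have finish : ∀ w : DMG.Walk G a b, w.nodes.dropLast.Nodup →
      (a ≠ b → b ∉ w.nodes.dropLast) →
      ((a ≠ b → w.nodes.Nodup) ∧ (a = b → w.nodes.dropLast.Nodup)) := by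
    intro w h1 h2
    refine ⟨?_, fun _ => h1⟩
    intro hne
    rw [DMG.Walk.nodes_eq_dropLast_append w, List.nodup_append]
    refine ⟨h1, List.nodup_singleton _, ?_⟩
    intro x hx y_ hx2 hy_
    subst y_
    rw [List.mem_singleton] at hx2
    subst hx2
    exact h2 hne hx
  by_cases hdir : G.IsDirectedIP ν
  · obtain ⟨hIP, huni, hintb⟩ := hdir
    have hfh : ν.firstHead = false := by
      cases ν with
      | nil => exact (huni : False).elim
      | cons s w' =>
          obtain ⟨hs, -⟩ := huni
          cases s with
          | dirF h => rfl
          | dirB h => exact (hs : False).elim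
          | bid h => exact (hs : False).elim
    obtain ⟨w, hmu, h1, h2, hf⟩ := DMG.dir_case ν hC hnt hdrop hbmem hlast hcoll hfh hintb
    obtain ⟨g1, g2⟩ := finish w h1 h2
    refine ⟨w, hmu, g1, g2, fun _ => ⟨hf, ?_⟩⟩
    have hiff := (DMG.Walk.muConn_iff w (DMG.Walk.muConn_nontrivial hmu)).1 hmu
    rw [hiff.2, hlast]
  · obtain ⟨w, hmu, h1, h2, hf⟩ := DMG.bid_case ν hC hnt hdrop hbmem hlast hcoll hanc
    obtain ⟨g1, g2⟩ := finish w h1 h2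
    refine ⟨w, hmu, g1, g2, ?_⟩
    intro hcase
    have hlw : w.lastHead = ν.lastHead := by
      have hiff := (DMG.Walk.muConn_iff w (DMG.Walk.muConn_nontrivial hmu)).1 hmu
      rw [hiff.2, hlast]
    rcases hcase with hbid | hdir'
    · obtain ⟨-, hallbid⟩ := hbid
      have hνfh : ν.firstHead = true := by
        cases ν with
        | nil => exact (hnt : False).elim
        | cons s w' =>
            obtain ⟨hs, -⟩ := hallbid
            cases s with
            | dirF h => exact (hs : False).elim
            | dirB h => exact (hs : False).elim
            | bid h => rfl
      rcases hf with h | h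
      · exact ⟨h, hlw⟩
      · exact ⟨h.trans hνfh.symm, hlw⟩
    · exact absurd hdir' hdir
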